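/- Let Ŷ be an n×k real matrix with linearly independent columns and Q = (Ŷ^T Ŷ)^{-1}. Define, for each sign pattern D (a diagonal matrix with ±1 diagonal entries), E_D = { v ∈ R^k : v ≥ 0 entrywise, (√v)^T (D Q D) (√v) = 1 }, where √v is the entrywise square root. Then the set F₁ = { ((⟨ŷ_1,s⟩)^2, …, (⟨ŷ_k,s⟩)^2) : s ∈ span(ŷ_1,…,ŷ_k), ‖s‖=1 } equals the union of E_D over all sign patterns D. -/

import Mathlib

open Matrix

section Aux

variable {n k : ℕ} (yhat : Fin k → EuclideanSpace ℝ (Fin n))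

private noncomputable def Gm : Matrix (Fin k) (Fin k) ℝ :=
  Matrix.of fun i j => (inner ℝ (yhat i) (yhat j) : ℝ)

private lemma inner_sum_eq (c : Fin k → ℝ) (i : Fin k) :
    (inner ℝ (yhat i) (∑ j, c j • yhat j) : ℝ) = (Gm yhat).mulVec c i := by
  simp only [Gm, Matrix.mulVec, dotProduct, inner_sum, real_inner_smul_right,
    Matrix.of_apply]
  exact Finset.sum_congr rfl fun j _ => mul_comm _ _

private lemma inner_self_sum (c : Fin k → ℝ) :
    (inner ℝ (∑ i, c i • yhat i) (∑ j, c j • yhat j) : ℝ) = c ⬝ᵥ (Gm yhat).mulVec c := by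
  simp only [sum_inner, real_inner_smul_left, dotProduct]
  exact Finset.sum_congr rfl fun i _ => by rw [inner_sum_eq]

private lemma gram_isUnit (hli : LinearIndependent ℝ yhat) : IsUnit (Gm yhat) := by
  rw [← Matrix.mulVec_injective_iff_isUnit]
  have hker : LinearMap.ker ((Gm yhat).mulVecLin) = ⊥ := by
    rw [LinearMap.ker_eq_bot']
    intro c hc
    rw [Matrix.mulVecLin_apply] at hc
    have h0 : c ⬝ᵥ (Gm yhat).mulVec c = 0 := by rw [hc]; simp
    rw [← inner_self_sum] at h0
    exact funext (Fintype.linearIndependent_iff.mp hli c (inner_self_eq_zero.mp h0))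
  have hinj := LinearMap.ker_eq_bot.mp hker
  rwa [← Matrix.coe_mulVecLin]

private lemma quad_set_eq (hli : LinearIndependent ℝ yhat) (w : Fin k → ℝ) :
    (∃ s : EuclideanSpace ℝ (Fin n),
        s ∈ Submodule.span ℝ (Set.range yhat) ∧ ‖s‖ = 1 ∧
        ∀ i, w i = (inner ℝ (yhat i) s : ℝ)) ↔
      w ⬝ᵥ (Gm yhat)⁻¹.mulVec w = 1 := by
  have hu := gram_isUnit yhat hli
  have hud : IsUnit (Gm yhat).det := (Matrix.isUnit_iff_isUnit_det _).mp hu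
  constructor
  · rintro ⟨s, hs, hns, hw⟩
    obtain ⟨c, rfl⟩ := (Submodule.mem_span_range_iff_exists_fun ℝ).mp hs
    have hwG : w = (Gm yhat).mulVec c := by
      funext i; rw [hw i, inner_sum_eq]
    have hQw : (Gm yhat)⁻¹.mulVec w = c := by
      rw [hwG, Matrix.mulVec_mulVec, Matrix.nonsing_inv_mul _ hud, Matrix.one_mulVec]
    rw [hQw, dotProduct_comm, hwG, ← inner_self_sum,
      real_inner_self_eq_norm_sq, hns, one_pow]
  · intro hq
    set c := (Gm yhat)⁻¹.mulVec w with hc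
    refine ⟨∑ i, c i • yhat i, ?_, ?_, ?_⟩
    · exact (Submodule.mem_span_range_iff_exists_fun ℝ).mpr ⟨c, rfl⟩
    · have h1 : (Gm yhat).mulVec c = w := by
        rw [hc, Matrix.mulVec_mulVec, Matrix.mul_nonsing_inv _ hud, Matrix.one_mulVec]
      have h2 : (inner ℝ (∑ i, c i • yhat i) (∑ j, c j • yhat j) : ℝ) = 1 := by
        rw [inner_self_sum, h1, dotProduct_comm]; exact hq
      have := real_inner_self_eq_norm_sq (∑ i, c i • yhat i)
      nlinarith [norm_nonneg (∑ i, c i • yhat i)]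
    · intro i
      rw [inner_sum_eq, hc, Matrix.mulVec_mulVec, Matrix.mul_nonsing_inv _ hud,
        Matrix.one_mulVec]

end Aux

/-- Multi-surface structure of the feasible region for width `q = 1`: the set of vectors
of squared inner products `(⟨ŷ_i, s⟩²)_i` over unit `s ∈ span(ŷ_i)` equals the union,
over all sign patterns `ε ∈ {±1}^k`, of the surfaces
`E_ε = { v ≥ 0 : (√v)ᵀ (D_ε Q D_ε) (√v) = 1 }` with `Q = (ŶᵀŶ)⁻¹`. -/
theorem stmt_7 {n k : ℕ} (yhat : Fin k → EuclideanSpace ℝ (Fin n))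
    (hli : LinearIndependent ℝ yhat)
    (Q : Matrix (Fin k) (Fin k) ℝ)
    (hQ : Q = (Matrix.of fun i j => (inner ℝ (yhat i) (yhat j) : ℝ))⁻¹) :
    {v : Fin k → ℝ | ∃ s : EuclideanSpace ℝ (Fin n),
        s ∈ Submodule.span ℝ (Set.range yhat) ∧ ‖s‖ = 1 ∧
        ∀ i, v i = (inner ℝ (yhat i) s : ℝ) ^ 2} =
      {v : Fin k → ℝ | ∃ ε : Fin k → ℝ, (∀ i, ε i = 1 ∨ ε i = -1) ∧
        (∀ i, 0 ≤ v i) ∧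
        (fun i => Real.sqrt (v i)) ⬝ᵥ
          (Matrix.diagonal ε * Q * Matrix.diagonal ε).mulVec
            (fun i => Real.sqrt (v i)) = 1} := by
  have hQ' : Q = (Gm yhat)⁻¹ := hQ
  have hdiag : ∀ (ε u : Fin k → ℝ),
      u ⬝ᵥ (Matrix.diagonal ε * Q * Matrix.diagonal ε).mulVec u
        = (fun i => ε i * u i) ⬝ᵥ Q.mulVec (fun i => ε i * u i) := by
    intro ε u
    rw [← Matrix.mulVec_mulVec, ← Matrix.mulVec_mulVec]
    have h1 : (Matrix.diagonal ε).mulVec u = fun i => ε i * u i := by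
      funext i; exact Matrix.mulVec_diagonal ε u i
    rw [h1, dotProduct]
    simp only [Matrix.mulVec_diagonal, dotProduct]
    exact Finset.sum_congr rfl fun i _ => by ring
  ext v
  simp only [Set.mem_setOf_eq]
  constructor
  · rintro ⟨s, hs, hns, hv⟩
    set w : Fin k → ℝ := fun i => (inner ℝ (yhat i) s : ℝ) with hwdef
    have hquad : w ⬝ᵥ Q.mulVec w = 1 := by
      rw [hQ']
      exact (quad_set_eq yhat hli w).mp ⟨s, hs, hns, fun i => rfl⟩
    refine ⟨fun i => if 0 ≤ w i then 1 else -1, fun i => by by_cases h : 0 ≤ w i <;> simp [h],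
      fun i => by rw [hv i]; positivity, ?_⟩
    rw [hdiag]
    have key : (fun i => (if 0 ≤ w i then (1:ℝ) else -1) * Real.sqrt (v i)) = w := by
      funext i
      have : Real.sqrt (v i) = |w i| := by
        rw [hv i, ← sq_abs, Real.sqrt_sq (abs_nonneg _)]
      rw [this]
      by_cases h : 0 ≤ w i
      · simp [h, abs_of_nonneg h]
      · simp [h, abs_of_neg (lt_of_not_ge h)]
    rw [key]; exact hquad
  · rintro ⟨ε, hε, hv, hq⟩
    set w : Fin k → ℝ := fun i => ε i * Real.sqrt (v i) with hwdef
    have hquad : w ⬝ᵥ (Gm yhat)⁻¹.mulVec w = 1 := by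
      rw [← hQ', ← hdiag]; exact hq
    obtain ⟨s, hs, hns, hw⟩ := (quad_set_eq yhat hli w).mpr hquad
    refine ⟨s, hs, hns, fun i => ?_⟩
    rw [← hw i, hwdef]
    have hε2 : ε i ^ 2 = 1 := by rcases hε i with h | h <;> rw [h] <;> ring
    have : (ε i * Real.sqrt (v i)) ^ 2 = ε i ^ 2 * Real.sqrt (v i) ^ 2 := by ring
    rw [this, hε2, Real.sq_sqrt (hv i), one_mul]
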